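/- The kernel of the group homomorphism from the homotopy braid group B̂₃ onto the symmetric group S₃ that sends the image of σ₁ to the transposition (1 2) and the image of σ₂ to the transposition (2 3) is exactly the subgroup of B̂₃ generated by b₁₂, b₁₃, b₂₃. -/
import Mathlib


/-- The commutator `[x, y] = x⁻¹ y⁻¹ x y` used in the paper. -/
def pcomm {G : Type*} [Group G] (x y : G) : G := x⁻¹ * y⁻¹ * x * y

/-- The braid relation `σ₁σ₂σ₁ = σ₂σ₁σ₂` on two generators. -/
def braidRel3 : Set (FreeGroup (Fin 2)) :=
  { FreeGroup.of 0 * FreeGroup.of 1 * FreeGroup.of 0 *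
      (FreeGroup.of 1 * FreeGroup.of 0 * FreeGroup.of 1)⁻¹ }

/-- The braid group `B₃`. -/
abbrev B3 := PresentedGroup braidRel3

/-- The generator `σ₁` of `B₃`. -/
def s1 : B3 := PresentedGroup.of 0
/-- The generator `σ₂` of `B₃`. -/
def s2 : B3 := PresentedGroup.of 1
/-- `a₁₂ = σ₁²`. -/
def a12 : B3 := s1 ^ 2
/-- `a₁₃ = σ₂σ₁²σ₂⁻¹`. -/
def a13 : B3 := s2 * s1 ^ 2 * s2⁻¹
/-- `a₂₃ = σ₂²`. -/
def a23 : B3 := s2 ^ 2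

/-- The homotopy relations in `B₃`: `[a₁₃, g⁻¹a₁₃g]` and `[a₂₃, g⁻¹a₂₃g]` for `g`
in the subgroup generated by `a₁₃` and `a₂₃`. -/
def homotopyRels3 : Set B3 :=
  { x | ∃ g ∈ Subgroup.closure {a13, a23},
        x = pcomm a13 (g⁻¹ * a13 * g) ∨ x = pcomm a23 (g⁻¹ * a23 * g) }

/-- The homotopy braid group `B̂₃`. -/
abbrev HB3 := B3 ⧸ Subgroup.normalClosure homotopyRels3

/-- The canonical projection `B₃ → B̂₃`. -/
def pr : B3 →* HB3 := QuotientGroup.mk' _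

/-- The image of `σ₁` in `B̂₃`. -/
def t1 : HB3 := pr s1
/-- The image of `σ₂` in `B̂₃`. -/
def t2 : HB3 := pr s2
/-- The image `b₁₂` of `a₁₂` in `B̂₃`. -/
def b12 : HB3 := pr a12
/-- The image `b₁₃` of `a₁₃` in `B̂₃`. -/
def b13 : HB3 := pr a13
/-- The image `b₂₃` of `a₂₃` in `B̂₃`. -/
def b23 : HB3 := pr a23
/-- `z = [b₂₃, b₁₃]`. -/
def zz : HB3 := pcomm b23 b13

/- ------------------- auxiliary lemmas ------------------- -/

lemma b12_eq : b12 = t1 ^ 2 := by simp only [b12, a12, t1, map_pow]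
lemma b13_eq : b13 = t2 * t1 ^ 2 * t2⁻¹ := by
  simp only [b13, a13, t1, t2, map_mul, map_pow, map_inv]
lemma b23_eq : b23 = t2 ^ 2 := by simp only [b23, a23, t2, map_pow]

lemma braidB3 : s1 * s2 * s1 = s2 * s1 * s2 := by
  have h : (PresentedGroup.mk braidRel3)
      (FreeGroup.of 0 * FreeGroup.of 1 * FreeGroup.of 0 *
        (FreeGroup.of 1 * FreeGroup.of 0 * FreeGroup.of 1)⁻¹) = 1 := by
    apply (QuotientGroup.eq_one_iff _).mpr
    exact Subgroup.subset_normalClosure rfl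
  simp only [map_mul, map_inv] at h
  have h' : s1 * s2 * s1 * (s2 * s1 * s2)⁻¹ = 1 := h
  exact mul_inv_eq_one.mp h'

lemma braidH : t1 * t2 * t1 = t2 * t1 * t2 := by
  have h := congrArg pr braidB3
  simpa only [map_mul, t1, t2] using h

lemma conj1 : t1 * t2 * t1⁻¹ = t2⁻¹ * t1 * t2 := by
  have h : t2 * ((t1 * t2 * t1⁻¹) * t1) = t2 * ((t2⁻¹ * t1 * t2) * t1) := by
    calc t2 * ((t1 * t2 * t1⁻¹) * t1) = t2 * t1 * t2 := by (try simp only [sq]); group; try group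
      _ = t1 * t2 * t1 := braidH.symm
      _ = t2 * ((t2⁻¹ * t1 * t2) * t1) := by (try simp only [sq]); group; try group
  exact mul_right_cancel (mul_left_cancel h)

lemma conj2 : t2 * t1 * t2⁻¹ = t1⁻¹ * t2 * t1 := by
  have h : t1 * ((t2 * t1 * t2⁻¹) * t2) = t1 * ((t1⁻¹ * t2 * t1) * t2) := by
    calc t1 * ((t2 * t1 * t2⁻¹) * t2) = t1 * t2 * t1 := by (try simp only [sq]); group; try group
      _ = t2 * t1 * t2 := braidH
      _ = t1 * ((t1⁻¹ * t2 * t1) * t2) := by (try simp only [sq]); group; try group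
  exact mul_right_cancel (mul_left_cancel h)

lemma l1 : t1 * b12 * t1⁻¹ = b12 := by rw [b12_eq]; group
lemma m1 : t1⁻¹ * b12 * t1 = b12 := by rw [b12_eq]; group
lemma l2 : t1 * b13 * t1⁻¹ = b23 := by
  rw [b13_eq, b23_eq]
  calc t1 * (t2 * t1 ^ 2 * t2⁻¹) * t1⁻¹ = (t1 * t2 * t1) * (t1 * t2 * t1⁻¹)⁻¹ := by (try simp only [sq]); group; try group
    _ = (t2 * t1 * t2) * (t2⁻¹ * t1 * t2)⁻¹ := by rw [braidH, conj1]
    _ = t2 ^ 2 := by (try simp only [sq]); group; try group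
lemma l3 : t1 * b23 * t1⁻¹ = b23⁻¹ * b13 * b23 := by
  rw [b13_eq, b23_eq]
  calc t1 * t2 ^ 2 * t1⁻¹ = (t1 * t2 * t1⁻¹) * (t1 * t2 * t1⁻¹) := by (try simp only [sq]); group; try group
    _ = (t2⁻¹ * t1 * t2) * (t2⁻¹ * t1 * t2) := by rw [conj1]
    _ = (t2 ^ 2)⁻¹ * (t2 * t1 ^ 2 * t2⁻¹) * t2 ^ 2 := by (try simp only [sq]); group; try group
lemma m2 : t1⁻¹ * b13 * t1 = b12⁻¹ * b23 * b12 := by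
  rw [b13_eq, b23_eq, b12_eq]
  calc t1⁻¹ * (t2 * t1 ^ 2 * t2⁻¹) * t1
      = (t1⁻¹ * (t2 * t1 * t2⁻¹) * t1) * (t1⁻¹ * (t2 * t1 * t2⁻¹) * t1) := by (try simp only [sq]); group; try group
    _ = (t1⁻¹ * (t1⁻¹ * t2 * t1) * t1) * (t1⁻¹ * (t1⁻¹ * t2 * t1) * t1) := by rw [conj2]
    _ = (t1 ^ 2)⁻¹ * t2 ^ 2 * t1 ^ 2 := by (try simp only [sq]); group; try group
lemma m3 : t1⁻¹ * b23 * t1 = b13 := by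
  rw [b13_eq, b23_eq]
  calc t1⁻¹ * t2 ^ 2 * t1 = (t1⁻¹ * t2 * t1) * (t1⁻¹ * t2 * t1) := by (try simp only [sq]); group; try group
    _ = (t2 * t1 * t2⁻¹) * (t2 * t1 * t2⁻¹) := by rw [← conj2]
    _ = t2 * t1 ^ 2 * t2⁻¹ := by (try simp only [sq]); group; try group
lemma l4 : t2 * b12 * t2⁻¹ = b13 := by rw [b12_eq, b13_eq]
lemma m4 : t2⁻¹ * b12 * t2 = b23⁻¹ * b13 * b23 := by rw [b12_eq, b13_eq, b23_eq]; group
lemma l5 : t2 * b13 * t2⁻¹ = b23 * b12 * b23⁻¹ := by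
  rw [b12_eq, b13_eq, b23_eq]
  simp only [sq, mul_assoc, mul_inv_rev]
lemma m5 : t2⁻¹ * b13 * t2 = b12 := by rw [b12_eq, b13_eq]; group
lemma l6 : t2 * b23 * t2⁻¹ = b23 := by rw [b23_eq]; group
lemma m6 : t2⁻¹ * b23 * t2 = b23 := by rw [b23_eq]; group

lemma closure_image_top {G H : Type*} [Group G] [Group H] (φ : G →* H)
    (hφ : Function.Surjective φ) {S : Set G} (hS : Subgroup.closure S = ⊤) :
    Subgroup.closure (φ '' S) = ⊤ := by
  rw [← MonoidHom.map_closure, hS, ← MonoidHom.range_eq_map]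
  exact MonoidHom.range_eq_top.mpr hφ

lemma top_gen : Subgroup.closure ({t1, t2} : Set HB3) = ⊤ := by
  have hr : (Set.range (PresentedGroup.of : Fin 2 → B3)) = {s1, s2} := by
    ext x
    constructor
    · rintro ⟨i, rfl⟩
      fin_cases i
      · exact Or.inl rfl
      · exact Or.inr rfl
    · rintro (rfl | rfl)
      · exact ⟨0, rfl⟩
      · exact ⟨1, rfl⟩
  have h1 : Subgroup.closure ({s1, s2} : Set B3) = ⊤ := by
    rw [← hr]; exact PresentedGroup.closure_range_of _
  have h2 := closure_image_top pr (QuotientGroup.mk'_surjective _) h1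
  rwa [Set.image_insert_eq, Set.image_singleton] at h2

lemma conj_mem_of_gens {g : HB3}
    (h : ∀ s ∈ ({b12, b13, b23} : Set HB3), g * s * g⁻¹ ∈
      Subgroup.closure ({b12, b13, b23} : Set HB3)) :
    ∀ n ∈ Subgroup.closure ({b12, b13, b23} : Set HB3),
      g * n * g⁻¹ ∈ Subgroup.closure ({b12, b13, b23} : Set HB3) := by
  intro n hn
  set P := Subgroup.closure ({b12, b13, b23} : Set HB3)
  induction hn using Subgroup.closure_induction with
  | mem x hx => exact h x hx
  | one => simpa using P.one_mem
  | mul a b _ _ ha hb =>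
      have := P.mul_mem ha hb
      have e : g * (a * b) * g⁻¹ = (g * a * g⁻¹) * (g * b * g⁻¹) := by (try simp only [sq]); group; try group
      rwa [e]
  | inv a _ ha =>
      have := P.inv_mem ha
      have e : g * a⁻¹ * g⁻¹ = (g * a * g⁻¹)⁻¹ := by (try simp only [sq]); group; try group
      rwa [e]

lemma P_normal : (Subgroup.closure ({b12, b13, b23} : Set HB3)).Normal := by
  set P := Subgroup.closure ({b12, b13, b23} : Set HB3) with hPdef
  have hm12 : b12 ∈ P := Subgroup.subset_closure (by simp)
  have hm13 : b13 ∈ P := Subgroup.subset_closure (by simp)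
  have hm23 : b23 ∈ P := Subgroup.subset_closure (by simp)
  have key : ∀ g ∈ Subgroup.closure ({t1, t2} : Set HB3),
      (∀ n ∈ P, g * n * g⁻¹ ∈ P) ∧ (∀ n ∈ P, g⁻¹ * n * g ∈ P) := by
    intro g hg
    induction hg using Subgroup.closure_induction with
    | mem x hx =>
        simp only [Set.mem_insert_iff, Set.mem_singleton_iff] at hx
        rcases hx with rfl | rfl
        · constructor
          · apply conj_mem_of_gens
            intro s hs
            simp only [Set.mem_insert_iff, Set.mem_singleton_iff] at hs
            rcases hs with rfl | rfl | rfl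
            · rw [l1]; exact hm12
            · rw [l2]; exact hm23
            · rw [l3]; exact P.mul_mem (P.mul_mem (P.inv_mem hm23) hm13) hm23
          · have h' : ∀ s ∈ ({b12, b13, b23} : Set HB3), t1⁻¹ * s * (t1⁻¹)⁻¹ ∈ P := by
              intro s hs
              simp only [Set.mem_insert_iff, Set.mem_singleton_iff] at hs
              rw [inv_inv]
              rcases hs with rfl | rfl | rfl
              · rw [m1]; exact hm12
              · rw [m2]; exact P.mul_mem (P.mul_mem (P.inv_mem hm12) hm23) hm12
              · rw [m3]; exact hm13
            intro n hn
            have := conj_mem_of_gens h' n hn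
            rwa [inv_inv] at this
        · constructor
          · apply conj_mem_of_gens
            intro s hs
            simp only [Set.mem_insert_iff, Set.mem_singleton_iff] at hs
            rcases hs with rfl | rfl | rfl
            · rw [l4]; exact hm13
            · rw [l5]; exact P.mul_mem (P.mul_mem hm23 hm12) (P.inv_mem hm23)
            · rw [l6]; exact hm23
          · have h' : ∀ s ∈ ({b12, b13, b23} : Set HB3), t2⁻¹ * s * (t2⁻¹)⁻¹ ∈ P := by
              intro s hs
              simp only [Set.mem_insert_iff, Set.mem_singleton_iff] at hs
              rw [inv_inv]
              rcases hs with rfl | rfl | rfl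
              · rw [m4]; exact P.mul_mem (P.mul_mem (P.inv_mem hm23) hm13) hm23
              · rw [m5]; exact hm12
              · rw [m6]; exact hm23
            intro n hn
            have := conj_mem_of_gens h' n hn
            rwa [inv_inv] at this
    | one =>
        constructor <;> intro n hn <;> simpa using hn
    | mul a b _ _ iha ihb =>
        constructor
        · intro n hn
          have := iha.1 _ (ihb.1 n hn)
          have e : a * (b * n * b⁻¹) * a⁻¹ = (a * b) * n * (a * b)⁻¹ := by (try simp only [sq]); group; try group
          rwa [e] at this
        · intro n hn
          have := ihb.2 _ (iha.2 n hn)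
          have e : b⁻¹ * (a⁻¹ * n * a) * b = (a * b)⁻¹ * n * (a * b) := by (try simp only [sq]); group; try group
          rwa [e] at this
    | inv a _ iha =>
        refine ⟨fun n hn => ?_, fun n hn => ?_⟩
        · have := iha.2 n hn; rwa [inv_inv]
        · have := iha.1 n hn; rwa [inv_inv]
  constructor
  intro n hn g
  exact (key g (by rw [top_gen]; trivial)).1 n hn

/-- The kernel of the homomorphism `B̂₃ → S₃`, `σ₁ ↦ (1 2)`, `σ₂ ↦ (2 3)`, is the
subgroup generated by `b₁₂, b₁₃, b₂₃`. -/
theorem ker_to_symmetric_group (f : HB3 →* Equiv.Perm (Fin 3))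
    (hf1 : f t1 = Equiv.swap 0 1) (hf2 : f t2 = Equiv.swap 1 2) :
    f.ker = Subgroup.closure ({b12, b13, b23} : Set HB3) := by
  set P := Subgroup.closure ({b12, b13, b23} : Set HB3) with hPdef
  haveI hN : P.Normal := P_normal
  -- f kills the generators
  have fb12 : f b12 = 1 := by rw [b12_eq, map_pow, hf1]; decide
  have fb23 : f b23 = 1 := by rw [b23_eq, map_pow, hf2]; decide
  have fb13 : f b13 = 1 := by
    rw [b13_eq, map_mul, map_mul, map_inv, map_pow, hf1, hf2]; decide
  have hPle : P ≤ f.ker := by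
    rw [hPdef, Subgroup.closure_le]
    intro s hs
    simp only [Set.mem_insert_iff, Set.mem_singleton_iff] at hs
    rcases hs with rfl | rfl | rfl
    · exact fb12
    · exact fb13
    · exact fb23
  -- the quotient by P
  set q : HB3 →* HB3 ⧸ P := QuotientGroup.mk' P with hq
  set x : HB3 ⧸ P := q t1 with hx
  set y : HB3 ⧸ P := q t2 with hy
  have hx2 : x * x = 1 := by
    have : q b12 = 1 := (QuotientGroup.eq_one_iff b12).mpr (Subgroup.subset_closure (by simp))
    rw [b12_eq, sq, map_mul] at this
    exact this
  have hy2 : y * y = 1 := by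
    have : q b23 = 1 := (QuotientGroup.eq_one_iff b23).mpr (Subgroup.subset_closure (by simp))
    rw [b23_eq, sq, map_mul] at this
    exact this
  have hbr : x * y * x = y * x * y := by
    have := congrArg q braidH
    simpa only [map_mul] using this
  have exx : ∀ w : HB3 ⧸ P, x * (x * w) = w := fun w => by rw [← mul_assoc, hx2, one_mul]
  have eyy : ∀ w : HB3 ⧸ P, y * (y * w) = w := fun w => by rw [← mul_assoc, hy2, one_mul]
  have exyx : y * (x * y) = x * (y * x) := by
    simpa only [mul_assoc] using hbr.symm
  have exyxw : ∀ w : HB3 ⧸ P, y * (x * (y * w)) = x * (y * (x * w)) := fun w => by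
    simp only [← mul_assoc]
    rw [show y * x * y = x * y * x from hbr.symm]
  have hxinv : x⁻¹ = x := inv_eq_of_mul_eq_one_right hx2
  have hyinv : y⁻¹ = y := inv_eq_of_mul_eq_one_right hy2
  -- classification of elements of the quotient
  have hall : ∀ u : HB3 ⧸ P,
      u = 1 ∨ u = x ∨ u = y ∨ u = x * y ∨ u = y * x ∨ u = x * y * x := by
    intro u
    have htop : Subgroup.closure ({x, y} : Set (HB3 ⧸ P)) = ⊤ := by
      have h2 := closure_image_top q (QuotientGroup.mk'_surjective _) top_gen
      rwa [Set.image_insert_eq, Set.image_singleton] at h2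
    have hu : u ∈ Subgroup.closure ({x, y} : Set (HB3 ⧸ P)) := by rw [htop]; trivial
    induction hu using Subgroup.closure_induction with
    | mem a ha =>
        simp only [Set.mem_insert_iff, Set.mem_singleton_iff] at ha
        rcases ha with rfl | rfl
        · exact Or.inr (Or.inl rfl)
        · exact Or.inr (Or.inr (Or.inl rfl))
    | one => exact Or.inl rfl
    | mul a b _ _ iha ihb =>
        rcases iha with rfl | rfl | rfl | rfl | rfl | rfl <;>
          rcases ihb with rfl | rfl | rfl | rfl | rfl | rfl <;>
            simp [mul_assoc, exx, eyy, hx2, hy2, exyx, exyxw]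
    | inv a _ iha =>
        rcases iha with rfl | rfl | rfl | rfl | rfl | rfl <;>
          simp [mul_inv_rev, hxinv, hyinv, mul_assoc, exx, eyy, hx2, hy2, exyx, exyxw]
  -- the induced map
  set F : HB3 ⧸ P →* Equiv.Perm (Fin 3) := QuotientGroup.lift P f hPle with hF
  have hFq : ∀ w : HB3, F (q w) = f w := fun w => rfl
  apply le_antisymm
  · intro z hz
    have hz1 : f z = 1 := hz
    rcases hall (q z) with h | h | h | h | h | h
    · exact (QuotientGroup.eq_one_iff z).mp h
    · exfalso
      have : f z = f t1 := by rw [← hFq, ← hFq, h]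
      rw [hz1, hf1] at this
      exact absurd this (by decide)
    · exfalso
      have : f z = f t2 := by rw [← hFq, ← hFq, h]
      rw [hz1, hf2] at this
      exact absurd this (by decide)
    · exfalso
      have h' : q z = q (t1 * t2) := by rw [map_mul]; exact h
      have : f z = f (t1 * t2) := by rw [← hFq, ← hFq, h']
      rw [hz1, map_mul, hf1, hf2] at this
      exact absurd this (by decide)
    · exfalso
      have h' : q z = q (t2 * t1) := by rw [map_mul]; exact h
      have : f z = f (t2 * t1) := by rw [← hFq, ← hFq, h']
      rw [hz1, map_mul, hf1, hf2] at this
      exact absurd this (by decide)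
    · exfalso
      have h' : q z = q (t1 * t2 * t1) := by rw [map_mul, map_mul]; exact h
      have : f z = f (t1 * t2 * t1) := by rw [← hFq, ← hFq, h']
      rw [hz1, map_mul, map_mul, hf1, hf2] at this
      exact absurd this (by decide)
  · exact hPle
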